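/- Let n be a power of 2 and let F_n be the n × n Discrete Fourier Transform matrix over ℂ, with entries F_n[j,k] = ω^{jk} for ω = exp(−2πi/n). Then F_n ∈ (BB*)^2; that is, F_n is a product of 2 matrices each of the form M1 · M2* with M1, M2 butterfly matrices of size n. -/

import Mathlib

noncomputable section

open Matrix

/-- A butterfly factor matrix of size `n` with block size `k`: a block-diagonal matrix
whose `n/k` diagonal blocks are butterfly factors of size `k`, i.e. `k × k` matrices of
the block form `[[D1, D2], [D3, D4]]` with each `Dᵢ` a `(k/2) × (k/2)` diagonal matrix.
Equivalently, nonzero entries may occur only at positions `(i, j)` lying in the same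
diagonal `k × k` block and with `i ≡ j (mod k/2)`. -/
def IsButterflyFactorMatrix (n k : ℕ) (B : Matrix (Fin n) (Fin n) ℂ) : Prop :=
  2 ≤ k ∧ k ∣ n ∧
    ∀ i j : Fin n, B i j ≠ 0 →
      i.val / k = j.val / k ∧ i.val % (k / 2) = j.val % (k / 2)

/-- A butterfly matrix of size `n = 2^b`: a product `B_n · B_{n/2} · ⋯ · B_2` where `B_k`
is a butterfly factor matrix of size `n` with block size `k`. -/
def IsButterflyMatrix (n : ℕ) (M : Matrix (Fin n) (Fin n) ℂ) : Prop :=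
  ∃ b : ℕ, n = 2 ^ b ∧
    ∃ B : ℕ → Matrix (Fin n) (Fin n) ℂ,
      (∀ t, 1 ≤ t → t ≤ b → IsButterflyFactorMatrix n (2 ^ t) (B t)) ∧
      M = (List.ofFn fun t : Fin b => B (b - t.val)).prod

/-- `M ∈ BB*`: `M = M1 · M2ᴴ` with `M1`, `M2` butterfly matrices. -/
def InBBStar (n : ℕ) (M : Matrix (Fin n) (Fin n) ℂ) : Prop :=
  ∃ M1 M2 : Matrix (Fin n) (Fin n) ℂ,
    IsButterflyMatrix n M1 ∧ IsButterflyMatrix n M2 ∧ M = M1 * M2ᴴ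

/-- `M ∈ (BB*)^w`: `M` is a product of `w` matrices each in `BB*`. -/
def InBBStarPow (n w : ℕ) (M : Matrix (Fin n) (Fin n) ℂ) : Prop :=
  ∃ f : Fin w → Matrix (Fin n) (Fin n) ℂ,
    (∀ i, InBBStar n (f i)) ∧ M = (List.ofFn f).prod

/-- `M ∈ (BB*)^w_e`: `M` (of size `n × n`) is the upper-left `n × n` corner of an
`en × en` matrix `E ∈ (BB*)^w`. -/
def InBBStarPowExp (n w e : ℕ) (M : Matrix (Fin n) (Fin n) ℂ) : Prop :=
  ∃ E : Matrix (Fin (e * n)) (Fin (e * n)) ℂ,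
    InBBStarPow (e * n) w E ∧
    ∀ (i j : Fin n) (hi : i.val < e * n) (hj : j.val < e * n),
      M i j = E ⟨i.val, hi⟩ ⟨j.val, hj⟩

/-- `P` is a permutation matrix. -/
def IsPermutationMatrix (n : ℕ) (P : Matrix (Fin n) (Fin n) ℂ) : Prop :=
  ∃ σ : Equiv.Perm (Fin n), ∀ i j, P i j = if i = σ j then 1 else 0

/-- `M` (with at most one nonzero entry per column) meets the `s` balance condition:
partitioning the columns into consecutive chunks of size `s`, every chunk contains, for
each residue `0 ≤ m < s`, exactly one column whose nonzero entry lies in a row with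
index `≡ m (mod s)`. -/
def MeetsBalance (n s : ℕ) (M : Matrix (Fin n) (Fin n) ℂ) : Prop :=
  ∀ c < n / s, ∀ m < s,
    {j : Fin n | j.val / s = c ∧ ∃ i : Fin n, M i j ≠ 0 ∧ i.val % s = m}.ncard = 1

/-- `M` is modular-balanced: it meets the `2^j` balance condition for all `2 ≤ 2^j ≤ n`. -/
def ModularBalanced (n : ℕ) (M : Matrix (Fin n) (Fin n) ℂ) : Prop :=
  ∀ j : ℕ, 1 ≤ j → 2 ^ j ≤ n → MeetsBalance n (2 ^ j) M

/-- `H` is a horizontal step matrix: whenever `H[i,j] ≠ 0` and `H[i',j'] ≠ 0` with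
`j ≤ j'`, we have `j' - j ≥ (i' - i) mod n`. -/
def IsHorizontalStep (n : ℕ) (H : Matrix (Fin n) (Fin n) ℂ) : Prop :=
  ∀ i i' j j' : Fin n, j.val ≤ j'.val → H i j ≠ 0 → H i' j' ≠ 0 →
    ((i'.val : ℤ) - (i.val : ℤ)) % (n : ℤ) ≤ (j'.val : ℤ) - (j.val : ℤ)

/-- Reversal of the `b` low-order bits of `x`. -/
def bitRev (b x : ℕ) : ℕ :=
  (Finset.range b).sum fun t => x / 2 ^ t % 2 * 2 ^ (b - 1 - t)


open Finset in
lemma two_pow_sum (b : ℕ) : ∑ t ∈ Finset.range b, 2 ^ t = 2 ^ b - 1 := by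
  induction b with
  | zero => simp
  | succ b ih => rw [Finset.sum_range_succ, ih]; have := Nat.one_le_two_pow (n := b); omega

lemma ofBits_div_mod : ∀ (s b : ℕ) (g : ℕ → ℕ), (∀ u, g u ≤ 1) → s < b →
    (∑ u ∈ Finset.range b, g u * 2 ^ u) / 2 ^ s % 2 = g s := by
  intro s
  induction s with
  | zero =>
    intro b g hg hb
    obtain ⟨b', rfl⟩ : ∃ b', b = b' + 1 := ⟨b - 1, by omega⟩
    rw [Finset.sum_range_succ']
    have : ∀ i, g (i + 1) * 2 ^ (i + 1) = (g (i + 1) * 2 ^ i) * 2 := by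
      intro i; rw [pow_succ]; ring
    rw [Finset.sum_congr rfl fun i _ => this i, ← Finset.sum_mul]
    have := hg 0
    simp only [pow_zero, Nat.div_one, mul_one]
    omega
  | succ s ih =>
    intro b g hg hb
    obtain ⟨b', rfl⟩ : ∃ b', b = b' + 1 := ⟨b - 1, by omega⟩
    rw [Finset.sum_range_succ']
    have h1 : ∀ i, g (i + 1) * 2 ^ (i + 1) = 2 * (g (i + 1) * 2 ^ i) := by
      intro i; rw [pow_succ]; ring
    rw [Finset.sum_congr rfl fun i _ => h1 i, ← Finset.mul_sum]
    have h2 : (2 * (∑ i ∈ Finset.range b', g (i + 1) * 2 ^ i) + g 0 * 2 ^ 0) / 2 ^ (s + 1)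
        = (∑ i ∈ Finset.range b', g (i + 1) * 2 ^ i) / 2 ^ s := by
      rw [pow_succ', ← Nat.div_div_eq_div_mul]
      congr 1
      have := hg 0
      omega
    rw [h2]
    exact ih b' (fun u => g (u + 1)) (fun u => hg (u + 1)) (by omega)

lemma bits_eq_of : ∀ (b x y : ℕ), x < 2 ^ b → y < 2 ^ b →
    (∀ s < b, x / 2 ^ s % 2 = y / 2 ^ s % 2) → x = y := by
  intro b
  induction b with
  | zero => intro x y hx hy _; simp at hx hy; omega
  | succ b ih =>
    intro x y hx hy h
    have h0 := h 0 (by omega)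
    simp only [pow_zero, Nat.div_one] at h0
    have hd : x / 2 = y / 2 := by
      apply ih
      · have : (2:ℕ) ^ (b+1) = 2 ^ b * 2 := by rw [pow_succ]
        omega
      · have : (2:ℕ) ^ (b+1) = 2 ^ b * 2 := by rw [pow_succ]
        omega
      · intro s hs
        have := h (s + 1) (by omega)
        rw [pow_succ'] at this
        rwa [Nat.div_div_eq_div_mul, Nat.div_div_eq_div_mul]
    omega

lemma bitRev_eq_ofBits (b x : ℕ) :
    bitRev b x = ∑ u ∈ Finset.range b, (x / 2 ^ (b - 1 - u) % 2) * 2 ^ u := by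
  rw [bitRev, ← Finset.sum_range_reflect]
  apply Finset.sum_congr rfl
  intro u hu
  simp only [Finset.mem_range] at hu
  have : b - 1 - (b - 1 - u) = u := by omega
  rw [this]

lemma bitRev_lt (b x : ℕ) : bitRev b x < 2 ^ b := by
  rw [bitRev_eq_ofBits]
  have h1 : ∑ u ∈ Finset.range b, (x / 2 ^ (b - 1 - u) % 2) * 2 ^ u
      ≤ ∑ u ∈ Finset.range b, 2 ^ u := by
    apply Finset.sum_le_sum
    intro u _
    have : x / 2 ^ (b - 1 - u) % 2 ≤ 1 := by omega
    calc x / 2 ^ (b - 1 - u) % 2 * 2 ^ u ≤ 1 * 2 ^ u := by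
          exact Nat.mul_le_mul_right _ this
      _ = 2 ^ u := one_mul _
  rw [two_pow_sum] at h1
  have := Nat.one_le_two_pow (n := b)
  omega

lemma bitRev_bit (b x s : ℕ) (hs : s < b) :
    bitRev b x / 2 ^ s % 2 = x / 2 ^ (b - 1 - s) % 2 := by
  rw [bitRev_eq_ofBits]
  exact ofBits_div_mod s b _ (fun u => by omega) hs

lemma bitRev_bitRev (b x : ℕ) (hx : x < 2 ^ b) : bitRev b (bitRev b x) = x := by
  apply bits_eq_of b _ _ (bitRev_lt b _) hx
  intro s hs
  rw [bitRev_bit b _ s hs, bitRev_bit b x (b - 1 - s) (by omega)]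
  have : b - 1 - (b - 1 - s) = s := by omega
  rw [this]
lemma split_exp (e1 e2 n iv jb : ℕ) (h : e1 * e2 = n) :
    iv * (jb * e2) = e2 * (iv % e1) * jb + n * (iv / e1 * jb) := by
  conv_lhs => rw [← Nat.mod_add_div iv e1]
  subst h
  ring


def permMat {n : ℕ} (σ : Equiv.Perm (Fin n)) : Matrix (Fin n) (Fin n) ℂ :=
  Matrix.of fun i j => if i = σ j then 1 else 0

lemma permMat_mul {n : ℕ} (σ τ : Equiv.Perm (Fin n)) :
    permMat σ * permMat τ = permMat (σ * τ) := by
  ext i j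
  simp only [permMat, Matrix.mul_apply, Matrix.of_apply]
  rw [Finset.sum_eq_single (τ j)]
  · simp [Equiv.Perm.mul_apply]
    exact if_congr Iff.rfl rfl rfl
  · intro y _ hy; simp [hy]
  · intro h; exact absurd (Finset.mem_univ _) h

lemma permMat_one {n : ℕ} : permMat (1 : Equiv.Perm (Fin n)) = 1 := by
  ext i j
  simp [permMat, Matrix.one_apply, eq_comm]
  exact if_congr Iff.rfl rfl rfl

lemma permMat_conjTranspose {n : ℕ} (σ : Equiv.Perm (Fin n)) :
    (permMat σ)ᴴ = permMat σ⁻¹ := by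
  ext i j
  simp only [permMat, Matrix.conjTranspose_apply, Matrix.of_apply]
  by_cases hc : i = σ⁻¹ j
  · have h2 : j = σ i := by rw [hc]; simp
    rw [if_pos h2, if_pos hc]; simp
  · have h2 : ¬ j = σ i := fun hc2 => hc (by rw [hc2]; simp)
    rw [if_neg h2, if_neg hc]; simp

lemma mul_permMat_apply {n : ℕ} (M : Matrix (Fin n) (Fin n) ℂ) (σ : Equiv.Perm (Fin n))
    (i j : Fin n) : (M * permMat σ) i j = M i (σ j) := by
  simp only [permMat, Matrix.mul_apply, Matrix.of_apply]
  rw [Finset.sum_eq_single (σ j)]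
  · simp
  · intro y _ hy; simp [hy]
  · intro h; exact absurd (Finset.mem_univ _) h

lemma permMat_telescope {n : ℕ} (st : ℕ → Equiv.Perm (Fin n)) :
    ∀ t : ℕ, (List.ofFn fun s : Fin t =>
        permMat (st (t - s.val) * (st (t - s.val - 1))⁻¹)).prod
      = permMat (st t * (st 0)⁻¹) := by
  intro t
  induction t with
  | zero => simp [permMat_one]
  | succ t ih =>
    rw [List.ofFn_succ]
    have hfn : (fun s : Fin t =>
        permMat (st (t + 1 - (s.succ : Fin (t+1)).val) * (st (t + 1 - (s.succ : Fin (t+1)).val - 1))⁻¹))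
        = (fun s : Fin t => permMat (st (t - s.val) * (st (t - s.val - 1))⁻¹)) := by
      funext s
      have h1 : t + 1 - (s.succ : Fin (t+1)).val = t - s.val := by
        simp only [Fin.val_succ]; omega
      rw [h1]
    rw [hfn, List.prod_cons, ih]
    simp only [Fin.val_zero, Nat.sub_zero, Nat.add_sub_cancel]
    rw [permMat_mul]
    congr 1
    group

lemma pow_pred_mul (t : ℕ) (ht : 1 ≤ t) : (2:ℕ) ^ t = 2 ^ (t-1) * 2 := by
  conv_lhs => rw [show t = (t-1) + 1 by omega]
  rw [pow_succ]

lemma stage_val_lt {b : ℕ} (t : ℕ) (ht : t ≤ b) (a j : ℕ) (ha : a < 2 ^ t)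
    (hj : j < 2 ^ b) : a + 2 ^ t * (j / 2 ^ t) < 2 ^ b := by
  have h1 : j / 2 ^ t < 2 ^ (b - t) := by
    apply Nat.div_lt_of_lt_mul
    rw [← pow_add]
    have : t + (b - t) = b := by omega
    rw [this]; exact hj
  calc a + 2 ^ t * (j / 2 ^ t) < 2 ^ t + 2 ^ t * (j / 2 ^ t) := by omega
    _ = 2 ^ t * (j / 2 ^ t + 1) := by ring
    _ ≤ 2 ^ t * 2 ^ (b - t) := by
        apply Nat.mul_le_mul_left; omega
    _ = 2 ^ b := by rw [← pow_add]; congr 1; omega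

/-- Any permutation whose "stage maps" are injective is a butterfly matrix. -/
lemma isButterflyMatrix_permMat {b : ℕ} (σ : Equiv.Perm (Fin (2 ^ b)))
    (h : ∀ t ≤ b, Function.Injective
      (fun j : Fin (2 ^ b) => ((σ j).val % 2 ^ t, j.val / 2 ^ t))) :
    IsButterflyMatrix (2 ^ b) (permMat σ) := by
  classical
  -- stage functions
  have stf_lt : ∀ (t : ℕ) (j : Fin (2 ^ b)), t ≤ b →
      (σ j).val % 2 ^ t + 2 ^ t * (j.val / 2 ^ t) < 2 ^ b := fun t j ht =>
    stage_val_lt t ht _ _ (Nat.mod_lt _ (by positivity)) j.2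
  set stf : ℕ → Fin (2 ^ b) → Fin (2 ^ b) := fun t j =>
    if ht : t ≤ b then ⟨(σ j).val % 2 ^ t + 2 ^ t * (j.val / 2 ^ t), stf_lt t j ht⟩
    else j with hstf
  have stf_inj : ∀ t, Function.Injective (stf t) := by
    intro t
    by_cases ht : t ≤ b
    · intro j j' hjj'
      simp only [hstf, dif_pos ht] at hjj'
      have hv := congrArg Fin.val hjj'
      apply h t ht
      have ha : (σ j).val % 2 ^ t < 2 ^ t := Nat.mod_lt _ (by positivity)
      have ha' : (σ j').val % 2 ^ t < 2 ^ t := Nat.mod_lt _ (by positivity)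
      have e1 : (σ j).val % 2 ^ t = (σ j').val % 2 ^ t := by
        have := congrArg (fun x => x % 2 ^ t) hv
        simpa [Nat.add_mul_mod_self_left, Nat.mod_eq_of_lt ha, Nat.mod_eq_of_lt ha'] using this
      have e2 : j.val / 2 ^ t = j'.val / 2 ^ t := by
        have := congrArg (fun x => x / 2 ^ t) hv
        simpa [Nat.add_mul_div_left _ _ (show 0 < 2^t by positivity),
          Nat.div_eq_of_lt ha, Nat.div_eq_of_lt ha'] using this
      exact Prod.ext e1 e2
    · simp only [hstf, dif_neg ht]
      exact fun a b hab => hab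
  set st : ℕ → Equiv.Perm (Fin (2 ^ b)) := fun t =>
    Equiv.ofBijective (stf t) ((Finite.injective_iff_bijective).mp (stf_inj t)) with hst
  have st_apply : ∀ t j, st t j = stf t j := fun t j => rfl
  have st0 : st 0 = 1 := by
    apply Equiv.ext
    intro j
    rw [st_apply]
    simp only [hstf, dif_pos (Nat.zero_le b)]
    apply Fin.ext
    simp [Nat.mod_one, Nat.div_one]
  have stb : st b = σ := by
    apply Equiv.ext
    intro j
    rw [st_apply]
    simp only [hstf, dif_pos (le_refl b)]
    apply Fin.ext
    simp [Nat.mod_eq_of_lt (σ j).2, Nat.div_eq_of_lt j.2]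
  refine ⟨b, rfl, fun t => permMat (st t * (st (t - 1))⁻¹), ?_, ?_⟩
  · intro t ht1 htb
    refine ⟨?_, pow_dvd_pow 2 htb, ?_⟩
    · calc (2:ℕ) = 2 ^ 1 := (pow_one 2).symm
        _ ≤ 2 ^ t := Nat.pow_le_pow_right (by norm_num) ht1
    intro x y hxy
    have hx : x = st t ((st (t-1))⁻¹ y) := by
      by_contra hc
      apply hxy
      simp only [permMat, Matrix.of_apply, Equiv.Perm.mul_apply]
      exact if_neg hc
    set j : Fin (2 ^ b) := (st (t-1))⁻¹ y with hj
    have hy : y = st (t-1) j := by rw [hj]; simp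
    have hxv : x.val = (σ j).val % 2 ^ t + 2 ^ t * (j.val / 2 ^ t) := by
      rw [hx, st_apply]; simp only [hstf, dif_pos htb]
    have hyv : y.val = (σ j).val % 2 ^ (t-1) + 2 ^ (t-1) * (j.val / 2 ^ (t-1)) := by
      rw [hy, st_apply]; simp only [hstf, dif_pos (le_trans (Nat.sub_le t 1) htb)]
    have hpow : (2:ℕ) ^ t = 2 ^ (t-1) * 2 := pow_pred_mul t ht1
    have h2t : (0:ℕ) < 2 ^ t := by positivity
    have h2t1 : (0:ℕ) < 2 ^ (t-1) := by positivity
    constructor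
    · -- x / 2^t = y / 2^t
      rw [hxv, hyv]
      rw [Nat.add_mul_div_left _ _ h2t, Nat.div_eq_of_lt (Nat.mod_lt _ h2t), zero_add]
      rw [hpow, ← Nat.div_div_eq_div_mul, ← Nat.div_div_eq_div_mul]
      congr 1
      rw [Nat.add_mul_div_left _ _ h2t1, Nat.div_eq_of_lt (Nat.mod_lt _ h2t1), zero_add]
    · -- x % 2^(t/2) = y % 2^(t/2)
      have hhalf : 2 ^ t / 2 = 2 ^ (t-1) := by rw [hpow]; simp
      rw [hhalf, hxv, hyv]
      have e1 : (σ j).val % 2 ^ t + 2 ^ t * (j.val / 2 ^ t)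
          = (σ j).val % 2 ^ t + 2 ^ (t-1) * (2 * (j.val / 2 ^ t)) := by rw [hpow]; ring
      rw [e1, Nat.add_mul_mod_self_left, Nat.add_mul_mod_self_left]
      rw [Nat.mod_mod_of_dvd _ (Dvd.intro 2 hpow.symm),
        Nat.mod_mod_of_dvd _ (dvd_refl _)]
  · rw [permMat_telescope st b, st0, stb, inv_one, mul_one]

/-- The identity matrix is a butterfly matrix. -/
lemma isButterflyMatrix_one (b : ℕ) : IsButterflyMatrix (2 ^ b) (1 : Matrix (Fin (2^b)) (Fin (2^b)) ℂ) := by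
  rw [← permMat_one]
  apply isButterflyMatrix_permMat
  intro t ht j j' hjj'
  simp only [Equiv.Perm.one_apply, Prod.mk.injEq] at hjj'
  apply Fin.ext
  obtain ⟨h1, h2⟩ := hjj'
  calc j.val = 2 ^ t * (j.val / 2 ^ t) + j.val % 2 ^ t := (Nat.div_add_mod _ _).symm
    _ = 2 ^ t * (j'.val / 2 ^ t) + j'.val % 2 ^ t := by rw [h1, h2]
    _ = j'.val := Nat.div_add_mod _ _

namespace Twiddle

variable (b : ℕ)

def ω : ℂ := Complex.exp (-(2 * Real.pi * Complex.I) / ((2 ^ b : ℕ) : ℂ))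

lemma omega_pow_n : ω b ^ (2 ^ b : ℕ) = 1 := by
  rw [ω, ← Complex.exp_nat_mul]
  have hne : ((2 ^ b : ℕ) : ℂ) ≠ 0 := by
    simp [pow_ne_zero]
  rw [mul_div_cancel₀ _ hne]
  rw [Complex.exp_neg, Complex.exp_two_pi_mul_I]
  norm_num

lemma omega_pow_mod (a : ℕ) : ω b ^ a = ω b ^ (a % 2 ^ b) := by
  conv_lhs => rw [← Nat.div_add_mod a (2 ^ b)]
  rw [pow_add, pow_mul, omega_pow_n, one_pow, one_mul]

lemma omega_pow_congr {a c : ℕ} (h : a % 2 ^ b = c % 2 ^ b) : ω b ^ a = ω b ^ c := by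
  rw [omega_pow_mod b a, omega_pow_mod b c, h]

/-- The butterfly factors of the bit-reversed DFT. -/
def Bt (t : ℕ) : Matrix (Fin (2 ^ b)) (Fin (2 ^ b)) ℂ :=
  Matrix.of fun x y =>
    if x.val / 2 ^ t = y.val / 2 ^ t ∧ x.val % 2 ^ (t - 1) = y.val % 2 ^ (t - 1) then
      ω b ^ (2 ^ (b - t) * (x.val % 2 ^ t) * (y.val / 2 ^ (t - 1) % 2))
    else 0

lemma Bt_factor (t : ℕ) (ht1 : 1 ≤ t) (htb : t ≤ b) :
    IsButterflyFactorMatrix (2 ^ b) (2 ^ t) (Bt b t) := by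
  refine ⟨?_, pow_dvd_pow 2 htb, ?_⟩
  · calc (2:ℕ) = 2 ^ 1 := (pow_one 2).symm
      _ ≤ 2 ^ t := Nat.pow_le_pow_right (by norm_num) ht1
  · intro x y hxy
    have hhalf : 2 ^ t / 2 = 2 ^ (t - 1) := by
      conv_lhs => rw [show t = (t-1)+1 by omega, pow_succ]
      simp
    rw [hhalf]
    by_contra hc
    apply hxy
    simp only [Bt, Matrix.of_apply, ite_eq_right_iff]
    intro hcond
    exact absurd hcond hc

/-- partial product formula -/
lemma Bt_prod (t : ℕ) (htb : t ≤ b) :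
    ∀ i j : Fin (2 ^ b), ((List.ofFn fun s : Fin t => Bt b (t - s.val)).prod) i j
      = if i.val / 2 ^ t = j.val / 2 ^ t then
          ω b ^ (∑ s ∈ Finset.range t, 2 ^ (b - 1 - s) * (i.val % 2 ^ (s + 1)) * (j.val / 2 ^ s % 2))
        else 0 := by
  induction t with
  | zero =>
    intro i j
    simp only [List.ofFn_zero, List.prod_nil, pow_zero, Nat.div_one, Finset.range_zero,
      Finset.sum_empty, _root_.pow_zero]
    rw [Matrix.one_apply]
    by_cases h : i = j
    · rw [if_pos h, if_pos (by rw [h])]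
    · rw [if_neg h, if_neg (fun hc => h (Fin.ext hc))]
  | succ t ih =>
    intro i j
    have htb' : t ≤ b := by omega
    rw [List.ofFn_succ]
    have hfn : (fun s : Fin t => Bt b (t + 1 - (s.succ : Fin (t+1)).val))
        = (fun s : Fin t => Bt b (t - s.val)) := by
      funext s
      have : t + 1 - (s.succ : Fin (t+1)).val = t - s.val := by
        simp only [Fin.val_succ]
        omega
      rw [this]
    rw [hfn, List.prod_cons]
    simp only [Fin.val_zero, Nat.sub_zero]
    rw [Matrix.mul_apply]
    -- the unique nonzero summand
    have h2t : (0:ℕ) < 2 ^ t := by positivity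
    have hy0lt : i.val % 2 ^ t + 2 ^ t * (j.val / 2 ^ t) < 2 ^ b :=
      stage_val_lt t htb' _ _ (Nat.mod_lt _ h2t) j.2
    set y0 : Fin (2 ^ b) := ⟨i.val % 2 ^ t + 2 ^ t * (j.val / 2 ^ t), hy0lt⟩ with hy0
    have hy0mod : y0.val % 2 ^ t = i.val % 2 ^ t := by
      rw [hy0]
      simp only []
      rw [Nat.add_mul_mod_self_left, Nat.mod_mod_of_dvd _ (dvd_refl _)]
    have hy0div : y0.val / 2 ^ t = j.val / 2 ^ t := by
      rw [hy0]
      simp only []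
      rw [Nat.add_mul_div_left _ _ h2t, Nat.div_eq_of_lt (Nat.mod_lt _ h2t), zero_add]
    have key : ∀ y : Fin (2 ^ b), y ≠ y0 →
        (Bt b (t + 1)) i y * ((List.ofFn fun s : Fin t => Bt b (t - s.val)).prod) y j = 0 := by
      intro y hy
      rcases eq_or_ne ((Bt b (t+1)) i y) 0 with h0 | h0
      · rw [h0, zero_mul]
      rcases eq_or_ne (((List.ofFn fun s : Fin t => Bt b (t - s.val)).prod) y j) 0 with h1 | h1
      · rw [h1, mul_zero]
      exfalso
      apply hy
      have hcond : i.val / 2 ^ (t+1) = y.val / 2 ^ (t+1) ∧ i.val % 2 ^ t = y.val % 2 ^ t := by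
        by_contra hc
        apply h0
        simp only [Bt, Matrix.of_apply, Nat.add_sub_cancel]
        rw [if_neg hc]
      have hdiv : y.val / 2 ^ t = j.val / 2 ^ t := by
        by_contra hc
        apply h1
        rw [ih htb' y j, if_neg hc]
      apply Fin.ext
      calc y.val = y.val % 2 ^ t + 2 ^ t * (y.val / 2 ^ t) := (Nat.mod_add_div _ _).symm
        _ = i.val % 2 ^ t + 2 ^ t * (j.val / 2 ^ t) := by rw [← hcond.2, hdiv]
        _ = y0.val := rfl
    rw [Finset.sum_eq_single y0 (fun y _ hy => key y hy)
      (fun hmem => absurd (Finset.mem_univ _) hmem)]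
    rw [ih htb' y0 j, if_pos hy0div]
    have hy0div' : y0.val / 2 ^ (t+1) = j.val / 2 ^ (t+1) := by
      rw [pow_succ, ← Nat.div_div_eq_div_mul, ← Nat.div_div_eq_div_mul, hy0div]
    simp only [Bt, Matrix.of_apply, Nat.add_sub_cancel]
    by_cases hc : i.val / 2 ^ (t+1) = j.val / 2 ^ (t+1)
    · rw [if_pos hc, if_pos ⟨by rw [hc, hy0div'], hy0mod.symm⟩]
      rw [hy0div]
      rw [← pow_add]
      congr 1
      rw [Finset.sum_range_succ]
      have hterm : ∀ s, s < t → 2 ^ (b-1-s) * (y0.val % 2 ^ (s+1)) * (j.val / 2 ^ s % 2)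
          = 2 ^ (b-1-s) * (i.val % 2 ^ (s+1)) * (j.val / 2 ^ s % 2) := by
        intro s hs
        have : y0.val % 2 ^ (s+1) = i.val % 2 ^ (s+1) := by
          have hdvd : (2:ℕ) ^ (s+1) ∣ 2 ^ t := pow_dvd_pow 2 (by omega)
          calc y0.val % 2 ^ (s+1) = (y0.val % 2 ^ t) % 2 ^ (s+1) :=
                (Nat.mod_mod_of_dvd _ hdvd).symm
            _ = (i.val % 2 ^ t) % 2 ^ (s+1) := by rw [hy0mod]
            _ = i.val % 2 ^ (s+1) := Nat.mod_mod_of_dvd _ hdvd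
        rw [this]
      rw [Finset.sum_congr rfl (fun s hs => hterm s (Finset.mem_range.mp hs))]
      have hbt : b - (t+1) = b - 1 - t := by omega
      rw [hbt]
      ring
    · rw [if_neg hc, if_neg (fun hcond => hc (by rw [hcond.1, hy0div'])), zero_mul]

/-- the bit-reversed DFT matrix is a butterfly matrix -/
lemma isButterflyMatrix_revDFT :
    IsButterflyMatrix (2 ^ b) (Matrix.of fun i j : Fin (2 ^ b) =>
      ω b ^ (i.val * bitRev b j.val)) := by
  refine ⟨b, rfl, Bt b, fun t => Bt_factor b t, ?_⟩
  ext i j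
  rw [Bt_prod b b (le_refl b) i j]
  rw [if_pos (by rw [Nat.div_eq_of_lt i.2, Nat.div_eq_of_lt j.2])]
  rw [Matrix.of_apply]
  -- exponent congruence
  rw [bitRev, Finset.mul_sum]
  rw [← Finset.prod_pow_eq_pow_sum, ← Finset.prod_pow_eq_pow_sum]
  apply Finset.prod_congr rfl
  intro s hs
  have hsb : s < b := Finset.mem_range.mp hs
  have hsplit := split_exp (2 ^ (s+1)) (2 ^ (b-1-s)) (2 ^ b) i.val (j.val / 2 ^ s % 2)
    (by rw [← pow_add]; congr 1; omega)
  rw [hsplit, pow_add]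
  have h1 : ω b ^ (2 ^ b * (i.val / 2 ^ (s+1) * (j.val / 2 ^ s % 2))) = 1 := by
    rw [pow_mul, omega_pow_n, one_pow]
  rw [h1, mul_one]

end Twiddle
namespace Pascal

variable (b : ℕ)

/-- bits of a natural number, as a `ZMod 2` vector -/
def bitsF (x : ℕ) : Fin b → ZMod 2 := fun c => ((x / 2 ^ c.val % 2 : ℕ) : ZMod 2)

/-- reassemble a number from bits -/
def fromF (v : Fin b → ZMod 2) : ℕ :=
  ∑ s ∈ Finset.range b, (if h : s < b then (v ⟨s, h⟩).val else 0) * 2 ^ s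

lemma fromF_lt (v : Fin b → ZMod 2) : fromF b v < 2 ^ b := by
  have h1 : fromF b v ≤ ∑ s ∈ Finset.range b, 2 ^ s := by
    apply Finset.sum_le_sum
    intro s _
    have : (if h : s < b then (v ⟨s, h⟩).val else 0) ≤ 1 := by
      split
      · exact Nat.lt_succ_iff.mp (ZMod.val_lt _)
      · omega
    calc (if h : s < b then (v ⟨s, h⟩).val else 0) * 2 ^ s ≤ 1 * 2 ^ s :=
        Nat.mul_le_mul_right _ this
      _ = 2 ^ s := one_mul _
  rw [two_pow_sum] at h1
  have := Nat.one_le_two_pow (n := b)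
  omega

lemma fromF_bit (v : Fin b → ZMod 2) (s : Fin b) :
    fromF b v / 2 ^ s.val % 2 = (v s).val := by
  rw [fromF, ofBits_div_mod s.val b _ ?_ s.2]
  · rw [dif_pos s.2]
  · intro u
    split
    · exact Nat.lt_succ_iff.mp (ZMod.val_lt _)
    · omega

lemma bitsF_fromF (v : Fin b → ZMod 2) : bitsF b (fromF b v) = v := by
  funext c
  rw [bitsF, fromF_bit]
  exact ZMod.natCast_rightInverse _

/-- The Pascal matrix over GF(2). -/
def A : Matrix (Fin b) (Fin b) (ZMod 2) :=
  Matrix.of fun i j => ((Nat.choose i.val j.val : ℕ) : ZMod 2)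

lemma det_pascal (t : ℕ) : (Matrix.of fun r c : Fin t =>
    ((Nat.choose r.val c.val : ℕ) : ZMod 2)).det = 1 := by
  rw [Matrix.det_of_lowerTriangular]
  · apply Finset.prod_eq_one
    intro i _
    simp [Nat.choose_self]
  · intro i j hij
    have hij' : (i : ℕ) < (j : ℕ) := hij
    simp only [Matrix.of_apply]
    rw [Nat.choose_eq_zero_of_lt hij']
    simp

end Pascal

namespace Pascal

variable (b : ℕ)

/-- rows from the bottom -/
def Rbot (t : ℕ) (htb : t ≤ b) : Fin t → Fin b :=
  fun r => ⟨b - 1 - r.val, by have := r.2; omega⟩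

def Lmat (t : ℕ) : Matrix (Fin t) (Fin t) (ZMod 2) :=
  Matrix.of fun r k => ((Nat.choose (t - 1 - r.val) k.val : ℕ) : ZMod 2)

def Umat (t : ℕ) : Matrix (Fin t) (Fin t) (ZMod 2) :=
  Matrix.of fun k c => if k.val ≤ c.val then ((Nat.choose (b - t) (c.val - k.val) : ℕ) : ZMod 2) else 0

lemma vandermonde_nat (m p c : ℕ) :
    ∑ k ∈ Finset.range (c + 1), Nat.choose m k * Nat.choose p (c - k) = Nat.choose (m + p) c := by
  rw [Nat.add_choose_eq]
  rw [Finset.Nat.sum_antidiagonal_eq_sum_range_succ_mk]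

lemma bottom_eq_LU (t : ℕ) (htb : t ≤ b) :
    (A b).submatrix (Rbot b t htb) (Fin.castLE htb) = Lmat t * Umat b t := by
  ext r c
  rw [Matrix.mul_apply]
  have hterm : ∀ k : Fin t, Lmat t r k * Umat b t k c
      = (fun k : ℕ => if k ≤ c.val then ((Nat.choose (t-1-r.val) k * Nat.choose (b-t) (c.val-k) : ℕ) : ZMod 2) else 0) k.val := by
    intro k
    simp only [Lmat, Umat, Matrix.of_apply]
    split
    · push_cast; ring
    · rw [mul_zero]
  rw [Finset.sum_congr rfl (fun k _ => hterm k)]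
  rw [Fin.sum_univ_eq_sum_range (fun k => if k ≤ (c:ℕ) then
    (((t-1-(r:ℕ)).choose k * (b-t).choose ((c:ℕ)-k) : ℕ) : ZMod 2) else 0) t]
  have hsub : Finset.range (c.val + 1) ⊆ Finset.range t := by
    intro k hk
    simp only [Finset.mem_range] at *
    have := c.2
    omega
  rw [← Finset.sum_subset hsub]
  · rw [Finset.sum_congr rfl (fun k hk => if_pos (by simpa [Nat.lt_succ_iff] using Finset.mem_range.mp hk))]
    rw [← Nat.cast_sum, vandermonde_nat]
    have : t - 1 - r.val + (b - t) = b - 1 - r.val := by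
      have := r.2; omega
    rw [this]
    rfl
  · intro k _ hk
    rw [if_neg (by simp only [Finset.mem_range, Nat.lt_succ_iff] at hk; omega)]

lemma det_bottom_ne (t : ℕ) (htb : t ≤ b) :
    ((A b).submatrix (Rbot b t htb) (Fin.castLE htb)).det ≠ 0 := by
  rw [bottom_eq_LU b t htb, Matrix.det_mul]
  have hL : (Lmat t).det ≠ 0 := by
    have heq : Lmat t = (Matrix.of fun r c : Fin t =>
        ((Nat.choose r.val c.val : ℕ) : ZMod 2)).submatrix Fin.revPerm id := by
      ext r k
      simp only [Lmat, Matrix.submatrix_apply, Matrix.of_apply, id_eq]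
      congr 2
      rw [Fin.revPerm_apply, Fin.val_rev]
      omega
    rw [heq, Matrix.det_permute, det_pascal]
    rcases Int.units_eq_one_or (Equiv.Perm.sign (@Fin.revPerm t)) with h | h <;>
      rw [h] <;> decide
  have hU : (Umat b t).det ≠ 0 := by
    rw [Matrix.det_of_upperTriangular]
    · rw [Finset.prod_eq_one]
      · exact one_ne_zero
      · intro k _
        simp [Umat, Nat.choose_zero_right]
    · intro i j hij
      have : (j:ℕ) < (i:ℕ) := hij
      simp only [Umat, Matrix.of_apply]
      rw [if_neg (by omega)]
  exact mul_ne_zero hL hU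

lemma det_leading_ne (t : ℕ) (htb : t ≤ b) :
    ((A b).submatrix (Fin.castLE htb) (Fin.castLE htb)).det ≠ 0 := by
  have heq : (A b).submatrix (Fin.castLE htb) (Fin.castLE htb)
      = Matrix.of fun r c : Fin t => ((Nat.choose r.val c.val : ℕ) : ZMod 2) := rfl
  rw [heq, det_pascal]
  exact one_ne_zero

/-- if the rows `R` of the Pascal matrix applied to bits agree and high bits agree, the
numbers agree. -/
lemma core (t : ℕ) (htb : t ≤ b) (R : Fin t → Fin b)
    (hdet : ((A b).submatrix R (Fin.castLE htb)).det ≠ 0)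
    (j j' : Fin (2 ^ b))
    (hrows : ∀ r : Fin t,
      (A b).mulVec (bitsF b j.val) (R r) = (A b).mulVec (bitsF b j'.val) (R r))
    (hhigh : j.val / 2 ^ t = j'.val / 2 ^ t) : j = j' := by
  classical
  set v : Fin b → ZMod 2 := bitsF b j.val - bitsF b j'.val with hv
  have hv_high : ∀ c : Fin b, t ≤ c.val → v c = 0 := by
    intro c hc
    have hbit : j.val / 2 ^ c.val % 2 = j'.val / 2 ^ c.val % 2 := by
      have h1 : ∀ x : ℕ, x / 2 ^ c.val = x / 2 ^ t / 2 ^ (c.val - t) := by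
        intro x
        rw [Nat.div_div_eq_div_mul, ← pow_add]
        congr 2
        omega
      rw [h1, h1, hhigh]
    simp only [hv, Pi.sub_apply, bitsF, hbit, sub_self]
  have hAv : ∀ r : Fin t, (A b).mulVec v (R r) = 0 := by
    intro r
    rw [hv, Matrix.mulVec_sub, Pi.sub_apply, hrows r, sub_self]
  set w : Fin t → ZMod 2 := fun c => v (Fin.castLE htb c) with hw
  have hW : ((A b).submatrix R (Fin.castLE htb)).mulVec w = 0 := by
    funext r
    have hzero : ∀ c : Fin b, c ∉ Finset.univ.map (Fin.castLEEmb htb) →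
        (A b) (R r) c * v c = 0 := by
      intro c hc
      have hct : ¬ c.val < t := by
        intro hlt
        apply hc
        simp only [Finset.mem_map, Finset.mem_univ, true_and]
        exact ⟨⟨c.val, hlt⟩, Fin.ext rfl⟩
      rw [hv_high c (by omega), mul_zero]
    have h1 : (A b).mulVec v (R r) = ∑ c ∈ Finset.univ.map (Fin.castLEEmb htb),
        (A b) (R r) c * v c := by
      rw [Matrix.mulVec, dotProduct]
      exact (Finset.sum_subset (Finset.subset_univ _) (fun c _ hc => hzero c hc)).symm
    rw [Finset.sum_map] at h1
    have h2 : ((A b).submatrix R (Fin.castLE htb)).mulVec w r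
        = ∑ c : Fin t, (A b) (R r) (Fin.castLEEmb htb c) * v (Fin.castLEEmb htb c) := by
      rw [Matrix.mulVec, dotProduct]
      rfl
    rw [Pi.zero_apply, h2, ← h1, hAv r]
  have hw0 : w = 0 := Matrix.eq_zero_of_mulVec_eq_zero hdet hW
  have hv0 : ∀ c : Fin b, v c = 0 := by
    intro c
    by_cases hc : c.val < t
    · exact congrFun hw0 ⟨c.val, hc⟩
    · exact hv_high c (by omega)
  apply Fin.ext
  apply bits_eq_of b _ _ j.2 j'.2
  intro s hs
  have hcast : ((j.val / 2 ^ s % 2 : ℕ) : ZMod 2) = ((j'.val / 2 ^ s % 2 : ℕ) : ZMod 2) := by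
    have := hv0 ⟨s, hs⟩
    simp only [hv, Pi.sub_apply, sub_eq_zero] at this
    exact this
  have := congrArg ZMod.val hcast
  rwa [ZMod.val_cast_of_lt (by omega), ZMod.val_cast_of_lt (by omega)] at this

end Pascal

namespace Pascal

variable (b : ℕ)

lemma bit_of_mod (x t s : ℕ) (hs : s < t) : x % 2 ^ t / 2 ^ s % 2 = x / 2 ^ s % 2 := by
  have h1 : x / 2 ^ s = x % 2 ^ t / 2 ^ s + 2 ^ (t - s) * (x / 2 ^ t) := by
    conv_lhs => rw [← Nat.mod_add_div x (2 ^ t)]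
    have h2 : (2:ℕ) ^ t = 2 ^ s * 2 ^ (t - s) := by rw [← pow_add]; congr 1; omega
    rw [h2, mul_assoc, Nat.add_mul_div_left _ _ (by positivity : (0:ℕ) < 2 ^ s)]
  rw [h1]
  have h3 : (2:ℕ) ^ (t-s) * (x / 2 ^ t) = 2 * (2 ^ (t-s-1) * (x / 2 ^ t)) := by
    rw [← mul_assoc]
    congr 1
    rw [← pow_succ']
    congr 1
    omega
  rw [h3, Nat.add_mul_mod_self_left]

def sig2 : Fin (2 ^ b) → Fin (2 ^ b) :=
  fun j => ⟨fromF b ((A b).mulVec (bitsF b j.val)), fromF_lt b _⟩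

def sig1 : Fin (2 ^ b) → Fin (2 ^ b) :=
  fun j => ⟨bitRev b (sig2 b j).val, bitRev_lt b _⟩

lemma val_inj {x y : ZMod 2} (h : x.val = y.val) : x = y := by
  have hx := ZMod.natCast_rightInverse (n := 2) x
  have hy := ZMod.natCast_rightInverse (n := 2) y
  rw [← hx, ← hy, h]

lemma sig2_bit (j : Fin (2 ^ b)) (s : Fin b) :
    (sig2 b j).val / 2 ^ s.val % 2 = ((A b).mulVec (bitsF b j.val) s).val :=
  fromF_bit b _ s

lemma sig2_stage (t : ℕ) (htb : t ≤ b) :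
    Function.Injective (fun j : Fin (2 ^ b) => ((sig2 b j).val % 2 ^ t, j.val / 2 ^ t)) := by
  intro j j' h
  have h1 : (sig2 b j).val % 2 ^ t = (sig2 b j').val % 2 ^ t := congrArg Prod.fst h
  have h2 : j.val / 2 ^ t = j'.val / 2 ^ t := congrArg Prod.snd h
  apply core b t htb (Fin.castLE htb) (det_leading_ne b t htb) j j' ?_ h2
  intro r
  apply val_inj
  calc ((A b).mulVec (bitsF b j.val) (Fin.castLE htb r)).val
      = (sig2 b j).val / 2 ^ r.val % 2 := (sig2_bit b j (Fin.castLE htb r)).symm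
    _ = (sig2 b j).val % 2 ^ t / 2 ^ r.val % 2 := (bit_of_mod _ t _ r.2).symm
    _ = (sig2 b j').val % 2 ^ t / 2 ^ r.val % 2 := by rw [h1]
    _ = (sig2 b j').val / 2 ^ r.val % 2 := bit_of_mod _ t _ r.2
    _ = ((A b).mulVec (bitsF b j'.val) (Fin.castLE htb r)).val := sig2_bit b j' (Fin.castLE htb r)

lemma sig1_stage (t : ℕ) (htb : t ≤ b) :
    Function.Injective (fun j : Fin (2 ^ b) => ((sig1 b j).val % 2 ^ t, j.val / 2 ^ t)) := by
  intro j j' h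
  have h1 : (sig1 b j).val % 2 ^ t = (sig1 b j').val % 2 ^ t := congrArg Prod.fst h
  have h2 : j.val / 2 ^ t = j'.val / 2 ^ t := congrArg Prod.snd h
  apply core b t htb (Rbot b t htb) (det_bottom_ne b t htb) j j' ?_ h2
  intro r
  have hrb : r.val < b := by have := r.2; omega
  have hval : (Rbot b t htb r).val = b - 1 - r.val := rfl
  apply val_inj
  calc ((A b).mulVec (bitsF b j.val) (Rbot b t htb r)).val
      = (sig2 b j).val / 2 ^ (b - 1 - r.val) % 2 := by
        rw [← sig2_bit b j (Rbot b t htb r), hval]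
    _ = bitRev b (sig2 b j).val / 2 ^ r.val % 2 := (bitRev_bit b _ r.val hrb).symm
    _ = (sig1 b j).val / 2 ^ r.val % 2 := rfl
    _ = (sig1 b j).val % 2 ^ t / 2 ^ r.val % 2 := (bit_of_mod _ t _ r.2).symm
    _ = (sig1 b j').val % 2 ^ t / 2 ^ r.val % 2 := by rw [h1]
    _ = (sig1 b j').val / 2 ^ r.val % 2 := bit_of_mod _ t _ r.2
    _ = bitRev b (sig2 b j').val / 2 ^ r.val % 2 := rfl
    _ = (sig2 b j').val / 2 ^ (b - 1 - r.val) % 2 := bitRev_bit b _ r.val hrb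
    _ = ((A b).mulVec (bitsF b j'.val) (Rbot b t htb r)).val := by
        rw [← sig2_bit b j' (Rbot b t htb r), hval]

lemma sig2_injective : Function.Injective (sig2 b) := by
  intro j j' h
  apply sig2_stage b b (le_refl b)
  simp only [Prod.mk.injEq]
  exact ⟨by rw [h], by rw [Nat.div_eq_of_lt j.2, Nat.div_eq_of_lt j'.2]⟩

lemma sig1_injective : Function.Injective (sig1 b) := by
  intro j j' h
  apply sig2_injective b
  apply Fin.ext
  apply bits_eq_of b _ _ (sig2 b j).2 (sig2 b j').2
  intro s hs
  have h1 : bitRev b (sig2 b j).val = bitRev b (sig2 b j').val := congrArg Fin.val h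
  have := congrArg (fun x => x / 2 ^ (b - 1 - s) % 2) h1
  beta_reduce at this
  rwa [bitRev_bit b _ (b-1-s) (by omega), bitRev_bit b _ (b-1-s) (by omega),
    show b - 1 - (b - 1 - s) = s by omega] at this

end Pascal

/-- The `n × n` DFT matrix, with entries `ω^{jk}`, `ω = exp(-2πi/n)`,
is in `(BB*)^2`. -/
theorem dft_in_BBStar_pow_two (b n : ℕ) (hn : n = 2 ^ b) :
    InBBStarPow n 2 (Matrix.of fun j k : Fin n =>
      Complex.exp (-(2 * Real.pi * Complex.I) / n) ^ (j.val * k.val)) := by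
  subst hn
  classical
  -- the bit-reversed DFT matrix
  set M1 : Matrix (Fin (2 ^ b)) (Fin (2 ^ b)) ℂ := Matrix.of fun i j : Fin (2 ^ b) =>
    Twiddle.ω b ^ (i.val * bitRev b j.val) with hM1
  -- the bit-reversal permutation
  have revlt : ∀ x : Fin (2 ^ b), bitRev b x.val < 2 ^ b := fun x => bitRev_lt b x.val
  set revFin : Fin (2 ^ b) → Fin (2 ^ b) := fun x => ⟨bitRev b x.val, revlt x⟩ with hrevFin
  have revInvol : Function.Involutive revFin := by
    intro x
    apply Fin.ext
    exact bitRev_bitRev b x.val x.2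
  set revP : Equiv.Perm (Fin (2 ^ b)) := revInvol.toPerm with hrevP
  -- the two butterfly permutations
  set s1 : Equiv.Perm (Fin (2 ^ b)) := Equiv.ofBijective (Pascal.sig1 b)
    ((Finite.injective_iff_bijective).mp (Pascal.sig1_injective b)) with hs1
  set s2 : Equiv.Perm (Fin (2 ^ b)) := Equiv.ofBijective (Pascal.sig2 b)
    ((Finite.injective_iff_bijective).mp (Pascal.sig2_injective b)) with hs2
  have bf1 : IsButterflyMatrix (2 ^ b) (permMat s1) :=
    isButterflyMatrix_permMat s1 (fun t ht => Pascal.sig1_stage b t ht)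
  have bf2 : IsButterflyMatrix (2 ^ b) (permMat s2) :=
    isButterflyMatrix_permMat s2 (fun t ht => Pascal.sig2_stage b t ht)
  have bfM1 : IsButterflyMatrix (2 ^ b) M1 := Twiddle.isButterflyMatrix_revDFT b
  -- the permutation product identity
  have hpp : permMat s1 * (permMat s2)ᴴ = permMat revP := by
    rw [permMat_conjTranspose, permMat_mul]
    have heq : s1 * s2⁻¹ = revP := by
      apply Equiv.ext
      intro x
      have hx : s2 (s2⁻¹ x) = x := Equiv.apply_symm_apply _ x
      show s1 (s2⁻¹ x) = revP x
      calc s1 (s2⁻¹ x) = revFin (s2 (s2⁻¹ x)) := rfl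
      _ = revFin x := by rw [hx]
      _ = revP x := rfl
    rw [heq]
  refine ⟨![M1, permMat revP], ?_, ?_⟩
  · intro i
    fin_cases i
    · refine ⟨M1, 1, bfM1, isButterflyMatrix_one b, ?_⟩
      show M1 = M1 * (1 : Matrix (Fin (2^b)) (Fin (2^b)) ℂ)ᴴ
      rw [Matrix.conjTranspose_one, mul_one]
    · refine ⟨permMat s1, permMat s2, bf1, bf2, ?_⟩
      show permMat revP = permMat s1 * (permMat s2)ᴴ
      exact hpp.symm
  · show _ = (List.ofFn ![M1, permMat revP]).prod
    have hl : (List.ofFn ![M1, permMat revP]).prod = M1 * permMat revP := by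
      simp [List.ofFn_succ]
    rw [hl]
    ext i j
    rw [mul_permMat_apply]
    show Complex.exp (-(2 * Real.pi * Complex.I) / ((2 ^ b : ℕ) : ℂ)) ^ (i.val * j.val)
      = Twiddle.ω b ^ (i.val * bitRev b (revP j).val)
    have hj : (revP j).val = bitRev b j.val := rfl
    rw [hj, bitRev_bitRev b j.val j.2]
    rfl
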